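/- For any binary-input symmetric-output classical channel N with Shannon capacity C, the erasure channel E_{1−C} is more capable than N: for every input distribution p on {0,1}, I(X:Y) under E_{1−C} is at least I(X:Y) under N. In particular max_p I_N(X:Y) = C ≤ C(E_{1−C}) = C. -/

import Mathlib

open Finset

noncomputable def binEnt (q : ℝ) : ℝ :=
  -(q * Real.logb 2 q) - (1 - q) * Real.logb 2 (1 - q)

noncomputable def ent {Y : Type*} [Fintype Y] (f : Y → ℝ) : ℝ :=
  ∑ y, -(f y * Real.logb 2 (f y))

/-- Mutual information between the input and output of a binary-input channel `W`,
when the input distribution puts probability `q` on `true`. -/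
noncomputable def MI {Y : Type*} [Fintype Y] (q : ℝ) (W : Bool → Y → ℝ) : ℝ :=
  ent (fun y => q * W true y + (1 - q) * W false y)
    - (q * ent (W true) + (1 - q) * ent (W false))

/-- The binary erasure channel with erasure probability `ε`. -/
def BEC (ε : ℝ) : Bool → Bool ⊕ Unit → ℝ := fun b y =>
  match y with
  | Sum.inl b' => if b' = b then 1 - ε else 0
  | Sum.inr _ => ε


-- even part: log(1+x) + log(1-x) = -∑ x^(2k+2)/(k+1)
open Real in
lemma hs_even {x : ℝ} (h : |x| < 1) :
    HasSum (fun k : ℕ => x ^ (2*k+2) / (k+1)) (-(Real.log (1+x) + Real.log (1-x))) := by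
  set term := fun n : ℕ => (-x) ^ (n + 1) / ((n : ℝ) + 1) + x ^ (n + 1) / (n + 1) with hterm
  have h_eq : term ∘ (fun k : ℕ => 2*k+1) = fun k : ℕ => x ^ (2*k+2) / (k+1) := by
    ext n
    dsimp only [term, Function.comp]
    rw [Even.neg_pow ⟨n+1, by ring⟩ x]
    have h1 : ((2*n+1 : ℕ) : ℝ) + 1 = 2*((n:ℝ)+1) := by push_cast; ring
    have h2 : (2*n+1)+1 = 2*n+2 := by omega
    have h3 : ((n:ℝ)+1) ≠ 0 := by positivity
    rw [h1, h2, ← add_div, ← two_mul]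
    rw [mul_div_mul_left _ _ (two_ne_zero)]
  have hinj : Function.Injective (fun k : ℕ => 2*k+1) := fun a b hab => by
    simp only at hab; omega
  rw [← h_eq, hinj.hasSum_iff]
  · have h₁ := hasSum_pow_div_log_of_abs_lt_one (Eq.trans_lt (abs_neg x) h)
    have := h₁.add (hasSum_pow_div_log_of_abs_lt_one h)
    convert this using 1
    ring_nf
  · intro m hm
    have hodd : Odd (m + 1) := by
      rcases Nat.even_or_odd m with he | ho
      · exact Even.add_one he
      · exfalso; obtain ⟨k, hk⟩ := ho; exact hm ⟨k, by simp; omega⟩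
    dsimp [term]
    rw [Odd.neg_pow hodd, neg_div, neg_add_cancel]

open Real in
lemma hs_F {x : ℝ} (h : |x| < 1) :
    HasSum (fun k : ℕ => x ^ (2*k+2) / ((k+1)*(2*k+1)))
      ((1+x) * Real.log (1+x) + (1-x) * Real.log (1-x)) := by
  have h1 := (hasSum_log_sub_log_of_abs_lt_one h).mul_left x
  have h2 := h1.sub (hs_even h)
  convert h2 using 1
  · rfl
  · ext k
    have hk1 : ((k:ℝ)+1) ≠ 0 := by positivity
    have hk2 : (2*(k:ℝ)+1) ≠ 0 := by positivity
    have hp : x ^ (2*k+1+1) = x ^ (2*k+2) := by norm_num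
    rw [show x * (2 * (1 / (2 * (k:ℝ) + 1)) * x ^ (2*k+1)) = 2 * x ^ (2*k+2) / (2*(k:ℝ)+1) by
      rw [← hp]; ring]
    field_simp
    ring
  · ring

lemma c_summable : Summable (fun k : ℕ => 1/(((k:ℝ)+1)*(2*(k:ℝ)+1))) := by
  have h2 : Summable (fun n : ℕ => 1/((n:ℝ)+1)^2) := by
    have h := Real.summable_one_div_nat_pow.mpr (le_refl 2)
    exact_mod_cast (summable_nat_add_iff 1).mpr h
  apply Summable.of_nonneg_of_le (fun k => by positivity) (fun k => ?_) h2
  rw [div_le_div_iff₀ (by positivity) (by positivity)]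
  have : ((k:ℝ)+1)^2 ≤ ((k:ℝ)+1)*(2*(k:ℝ)+1) := by nlinarith [Nat.cast_nonneg (α := ℝ) k]
  linarith

noncomputable def Ffun (x : ℝ) : ℝ := (1+x) * Real.log (1+x) + (1-x) * Real.log (1-x)

lemma Ffun_cont : Continuous Ffun := by
  have h1 : Continuous fun x : ℝ => (1+x) * Real.log (1+x) :=
    Real.continuous_mul_log.comp (continuous_const.add continuous_id)
  have h2 : Continuous fun x : ℝ => (1-x) * Real.log (1-x) :=
    Real.continuous_mul_log.comp (continuous_const.sub continuous_id)
  exact h1.add h2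

lemma S_le : ∑' k : ℕ, 1/(((k:ℝ)+1)*(2*(k:ℝ)+1)) ≤ 2 * Real.log 2 := by
  apply Summable.tsum_le_of_sum_range_le c_summable
  intro n
  have hlim1 : Filter.Tendsto
      (fun x : ℝ => ∑ k ∈ Finset.range n, x^(2*k+2)/(((k:ℝ)+1)*(2*(k:ℝ)+1)))
      (nhdsWithin 1 (Set.Iio 1)) (nhds (∑ k ∈ Finset.range n, 1/(((k:ℝ)+1)*(2*(k:ℝ)+1)))) := by
    apply Filter.Tendsto.mono_left ?_ nhdsWithin_le_nhds
    have hc : Continuous (fun x : ℝ => ∑ k ∈ Finset.range n, x^(2*k+2)/(((k:ℝ)+1)*(2*(k:ℝ)+1))) := by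
      apply continuous_finset_sum
      intro k _
      exact (continuous_pow _).div_const _
    simpa using hc.tendsto 1
  have hlim2 : Filter.Tendsto Ffun (nhdsWithin 1 (Set.Iio 1)) (nhds (2 * Real.log 2)) := by
    apply Filter.Tendsto.mono_left ?_ nhdsWithin_le_nhds
    have heq : Ffun 1 = 2 * Real.log 2 := by norm_num [Ffun]
    have h := Ffun_cont.tendsto 1
    rwa [heq] at h
  apply le_of_tendsto_of_tendsto hlim1 hlim2
  filter_upwards [Ioo_mem_nhdsLT_of_mem
    (show (1:ℝ) ∈ Set.Ioc (0:ℝ) 1 from Set.mem_Ioc.mpr ⟨by norm_num, le_refl 1⟩)] with x hx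
  obtain ⟨hx0, hx1⟩ := hx
  have habs : |x| < 1 := abs_lt.mpr ⟨by linarith, hx1⟩
  have hsum := hs_F habs
  rw [show Ffun x = (1+x) * Real.log (1+x) + (1-x) * Real.log (1-x) from rfl,
    ← hsum.tsum_eq]
  exact Summable.sum_le_tsum (Finset.range n)
    (fun k _ => div_nonneg (pow_nonneg hx0.le _) (by positivity)) hsum.summable

lemma pow_rearrange {a b : ℝ} (ha : 0 ≤ a) (ha1 : a ≤ 1) (hb : 0 ≤ b) (hb1 : b ≤ 1)
    (J K : ℕ) : a^J * b^K + b^J * a^K ≤ (a*b)^J + (a*b)^K := by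
  wlog hJK : J ≤ K generalizing J K
  · have := this K J (le_of_not_ge hJK); linarith
  obtain ⟨d, rfl⟩ := Nat.exists_eq_add_of_le hJK
  have had : a^d ≤ 1 := pow_le_one₀ ha ha1
  have hbd : b^d ≤ 1 := pow_le_one₀ hb hb1
  have hP : 0 ≤ a^J * b^J := mul_nonneg (pow_nonneg ha J) (pow_nonneg hb J)
  have key : b^d + a^d ≤ 1 + a^d * b^d := by nlinarith
  calc a^J * b^(J+d) + b^J * a^(J+d)
      = (a^J * b^J) * (b^d + a^d) := by rw [pow_add, pow_add]; ring
    _ ≤ (a^J * b^J) * (1 + a^d * b^d) := by exact mul_le_mul_of_nonneg_left key hP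
    _ = (a*b)^J + (a*b)^(J+d) := by rw [mul_pow, pow_add, mul_pow]; ring

lemma cheb {a b : ℝ} (ha0 : 0 ≤ a) (ha1 : a < 1) (hb0 : 0 ≤ b) (hb1 : b < 1) :
    Ffun a * Ffun b ≤ (2 * Real.log 2) * Ffun (a * b) := by
  have haa : |a| < 1 := abs_lt.mpr ⟨by linarith, ha1⟩
  have hba : |b| < 1 := abs_lt.mpr ⟨by linarith, hb1⟩
  have hab0 : 0 ≤ a * b := mul_nonneg ha0 hb0
  have hab1 : a * b < 1 := by nlinarith
  have haba : |a * b| < 1 := abs_lt.mpr ⟨by linarith, hab1⟩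
  have hcs := c_summable
  set c : ℕ → ℝ := fun k => 1/(((k:ℝ)+1)*(2*(k:ℝ)+1)) with hc
  set S : ℝ := ∑' k, c k with hS
  have hcnn : ∀ k, 0 ≤ c k := fun k => by simp only [hc]; positivity
  have conv : ∀ x : ℝ, (fun k : ℕ => x^(2*k+2) * c k)
      = fun k : ℕ => x^(2*k+2)/(((k:ℝ)+1)*(2*(k:ℝ)+1)) := by
    intro x; ext k; rw [hc, mul_one_div]
  have hsa' : HasSum (fun k : ℕ => a^(2*k+2) * c k) (Ffun a) := by rw [conv a]; exact hs_F haa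
  have hsb' : HasSum (fun k : ℕ => b^(2*k+2) * c k) (Ffun b) := by rw [conv b]; exact hs_F hba
  have hsab' : HasSum (fun k : ℕ => (a*b)^(2*k+2) * c k) (Ffun (a*b)) := by
    rw [conv (a*b)]; exact hs_F haba
  have inner : ∀ j : ℕ, a^(2*j+2) * Ffun b + b^(2*j+2) * Ffun a
      ≤ (a*b)^(2*j+2) * S + Ffun (a*b) := by
    intro j
    have h1 : HasSum (fun k : ℕ => a^(2*j+2) * (b^(2*k+2) * c k)) (a^(2*j+2) * Ffun b) :=
      hsb'.mul_left _
    have h2 : HasSum (fun k : ℕ => b^(2*j+2) * (a^(2*k+2) * c k)) (b^(2*j+2) * Ffun a) :=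
      hsa'.mul_left _
    have h3 : HasSum (fun k : ℕ => (a*b)^(2*j+2) * c k) ((a*b)^(2*j+2) * S) :=
      hcs.hasSum.mul_left _
    have hL := h1.add h2
    have hR := h3.add hsab'
    have hterm : ∀ k : ℕ, a^(2*j+2) * (b^(2*k+2) * c k) + b^(2*j+2) * (a^(2*k+2) * c k)
        ≤ (a*b)^(2*j+2) * c k + (a*b)^(2*k+2) * c k := by
      intro k
      have hre := pow_rearrange ha0 ha1.le hb0 hb1.le (2*j+2) (2*k+2)
      calc a^(2*j+2) * (b^(2*k+2) * c k) + b^(2*j+2) * (a^(2*k+2) * c k)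
          = (a^(2*j+2) * b^(2*k+2) + b^(2*j+2) * a^(2*k+2)) * c k := by ring
        _ ≤ ((a*b)^(2*j+2) + (a*b)^(2*k+2)) * c k :=
            mul_le_mul_of_nonneg_right hre (hcnn k)
        _ = (a*b)^(2*j+2) * c k + (a*b)^(2*k+2) * c k := by ring
    have := Summable.tsum_le_tsum hterm hL.summable hR.summable
    rwa [hL.tsum_eq, hR.tsum_eq] at this
  have hFaFb : HasSum (fun j : ℕ => (a^(2*j+2) * c j) * Ffun b) (Ffun a * Ffun b) :=
    hsa'.mul_right _
  have hFbFa : HasSum (fun j : ℕ => (b^(2*j+2) * c j) * Ffun a) (Ffun b * Ffun a) :=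
    hsb'.mul_right _
  have hL := hFaFb.add hFbFa
  have hR1 : HasSum (fun j : ℕ => ((a*b)^(2*j+2) * c j) * S) (Ffun (a*b) * S) :=
    hsab'.mul_right _
  have hR2 : HasSum (fun j : ℕ => c j * Ffun (a*b)) (S * Ffun (a*b)) :=
    hcs.hasSum.mul_right _
  have hR := hR1.add hR2
  have hterm2 : ∀ j : ℕ, (a^(2*j+2) * c j) * Ffun b + (b^(2*j+2) * c j) * Ffun a
      ≤ ((a*b)^(2*j+2) * c j) * S + c j * Ffun (a*b) := by
    intro j
    calc (a^(2*j+2) * c j) * Ffun b + (b^(2*j+2) * c j) * Ffun a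
        = c j * (a^(2*j+2) * Ffun b + b^(2*j+2) * Ffun a) := by ring
      _ ≤ c j * ((a*b)^(2*j+2) * S + Ffun (a*b)) :=
          mul_le_mul_of_nonneg_left (inner j) (hcnn j)
      _ = ((a*b)^(2*j+2) * c j) * S + c j * Ffun (a*b) := by ring
  have hle := Summable.tsum_le_tsum hterm2 hL.summable hR.summable
  rw [hL.tsum_eq, hR.tsum_eq] at hle
  have hFab_nn : 0 ≤ Ffun (a*b) := by
    rw [← hsab'.tsum_eq]
    exact tsum_nonneg (fun k => mul_nonneg (pow_nonneg hab0 _) (hcnn k))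
  have hSle : S ≤ 2 * Real.log 2 := S_le
  nlinarith [mul_le_mul_of_nonneg_right hSle hFab_nn]

lemma binEnt_zero : binEnt 0 = 0 := by simp [binEnt]

lemma binEnt_one : binEnt 1 = 0 := by simp [binEnt]

lemma binEnt_symm (q : ℝ) : binEnt (1 - q) = binEnt q := by
  rw [binEnt, binEnt, sub_sub_cancel]; ring

lemma binEnt_half : binEnt (1/2) = 1 := by
  have h2 : Real.log 2 ≠ 0 := ne_of_gt (Real.log_pos (by norm_num))
  rw [binEnt, show (1:ℝ) - 1/2 = 1/2 by norm_num, one_div, Real.logb, Real.log_inv]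
  field_simp
  norm_num

lemma binEnt_nonneg {q : ℝ} (h0 : 0 ≤ q) (h1 : q ≤ 1) : 0 ≤ binEnt q := by
  have l1 : Real.logb 2 q ≤ 0 := Real.logb_nonpos (by norm_num) h0 h1
  have l2 : Real.logb 2 (1-q) ≤ 0 := Real.logb_nonpos (by norm_num) (by linarith) (by linarith)
  have := mul_nonpos_of_nonneg_of_nonpos h0 l1
  have := mul_nonpos_of_nonneg_of_nonpos (by linarith : (0:ℝ) ≤ 1-q) l2
  rw [binEnt]; linarith

lemma binEnt_le_one {q : ℝ} (h0 : 0 ≤ q) (h1 : q ≤ 1) : binEnt q ≤ 1 := by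
  rcases eq_or_lt_of_le h0 with h|h0'
  · rw [← h, binEnt_zero]; norm_num
  rcases eq_or_lt_of_le h1 with h|h1'
  · rw [h, binEnt_one]; norm_num
  have h1q : (0:ℝ) < 1 - q := by linarith
  have hlog2 : (0:ℝ) < Real.log 2 := Real.log_pos (by norm_num)
  have l1 := Real.log_le_sub_one_of_pos (show (0:ℝ) < 1/(2*q) by positivity)
  have l2 := Real.log_le_sub_one_of_pos (show (0:ℝ) < 1/(2*(1-q)) by positivity)
  have e1 : Real.log (1/(2*q)) = -(Real.log 2 + Real.log q) := by
    rw [one_div, Real.log_inv, Real.log_mul two_ne_zero (ne_of_gt h0')]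
  have e2 : Real.log (1/(2*(1-q))) = -(Real.log 2 + Real.log (1-q)) := by
    rw [one_div, Real.log_inv, Real.log_mul two_ne_zero (ne_of_gt h1q)]
  rw [e1] at l1; rw [e2] at l2
  have m1 := mul_le_mul_of_nonneg_left l1 h0'.le
  have m2 := mul_le_mul_of_nonneg_left l2 h1q.le
  have f1 : q * (1/(2*q) - 1) = 1/2 - q := by field_simp
  have f2 : (1-q) * (1/(2*(1-q)) - 1) = 1/2 - (1-q) := by field_simp
  rw [f1] at m1; rw [f2] at m2
  have goal2 : 0 ≤ q*Real.log q + (1-q)*Real.log (1-q) + Real.log 2 := by nlinarith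
  have heq : binEnt q = (-(q*Real.log q) - (1-q)*Real.log (1-q))/Real.log 2 := by
    rw [binEnt, Real.logb, Real.logb]; ring
  rw [heq, div_le_one hlog2]; linarith

lemma G_eq {a : ℝ} (ha0 : 0 ≤ a) (ha1 : a < 1) :
    1 - binEnt ((1-a)/2) = Ffun a / (2 * Real.log 2) := by
  have h2 : (0:ℝ) < Real.log 2 := Real.log_pos (by norm_num)
  have h1a : (0:ℝ) < 1 - a := by linarith
  have h1b : (0:ℝ) < 1 + a := by linarith
  rw [binEnt, Ffun, Real.logb, Real.logb]
  rw [show (1:ℝ) - (1-a)/2 = (1+a)/2 by ring]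
  rw [Real.log_div (ne_of_gt h1a) (by norm_num), Real.log_div (ne_of_gt h1b) (by norm_num)]
  field_simp
  ring

lemma G_even (x : ℝ) : 1 - binEnt ((1-(-x))/2) = 1 - binEnt ((1-x)/2) := by
  rw [show (1-(-x))/2 = 1 - (1-x)/2 by ring, binEnt_symm]

lemma one_sub_binEnt_mul {x y : ℝ} (hx : |x| ≤ 1) (hy : |y| ≤ 1) :
    (1 - binEnt ((1-x)/2)) * (1 - binEnt ((1-y)/2)) ≤ 1 - binEnt ((1-x*y)/2) := by
  -- reduce to |x|, |y|
  have habs : ∀ z : ℝ, 1 - binEnt ((1-z)/2) = 1 - binEnt ((1-|z|)/2) := by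
    intro z
    rcases abs_choice z with h|h
    · rw [h]
    · rw [h, G_even]
  rw [habs x, habs y, habs (x*y), abs_mul]
  set u := |x| with hu
  set v := |y| with hv
  have hu0 : 0 ≤ u := abs_nonneg x
  have hv0 : 0 ≤ v := abs_nonneg y
  have hu1 : u ≤ 1 := hx
  have hv1 : v ≤ 1 := hy
  rcases eq_or_lt_of_le hu1 with h|hu1'
  · rw [h]; norm_num [binEnt_zero]
  rcases eq_or_lt_of_le hv1 with h|hv1'
  · rw [h]; norm_num [binEnt_zero]
  have hlog2 : (0:ℝ) < Real.log 2 := Real.log_pos (by norm_num)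
  have huv1 : u*v < 1 := by nlinarith
  rw [G_eq hu0 hu1', G_eq hv0 hv1', G_eq (mul_nonneg hu0 hv0) huv1]
  rw [div_mul_div_comm, div_le_div_iff₀ (by positivity) (by positivity)]
  have hch := cheb hu0 hu1' hv0 hv1'
  calc Ffun u * Ffun v * (2*Real.log 2)
      ≤ (2*Real.log 2) * Ffun (u*v) * (2*Real.log 2) := by
        apply mul_le_mul_of_nonneg_right hch (by positivity)
    _ = Ffun (u*v) * (2*Real.log 2 * (2*Real.log 2)) := by ring

lemma bsc_ineq {q δ : ℝ} (hq0 : 0 ≤ q) (hq1 : q ≤ 1) (hd0 : 0 ≤ δ) (hd1 : δ ≤ 1) :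
    binEnt (q*(1-δ) + (1-q)*δ) - binEnt δ ≤ binEnt q * (1 - binEnt δ) := by
  have h := one_sub_binEnt_mul (x := 1-2*q) (y := 1-2*δ)
    (abs_le.mpr ⟨by linarith, by linarith⟩) (abs_le.mpr ⟨by linarith, by linarith⟩)
  rw [show (1-(1-2*q))/2 = q by ring, show (1-(1-2*δ))/2 = δ by ring,
    show (1-(1-2*q)*(1-2*δ))/2 = q*(1-δ) + (1-q)*δ by ring] at h
  nlinarith [h]

lemma mul_logb_split {x y : ℝ} (hx : 0 < x) (hy : 0 ≤ y) :
    (x*y) * Real.logb 2 (x*y) = (x*y) * Real.logb 2 x + (x*y) * Real.logb 2 y := by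
  rcases eq_or_lt_of_le hy with h|h
  · simp [← h]
  · rw [Real.logb, Real.logb, Real.logb, Real.log_mul (ne_of_gt hx) (ne_of_gt h)]; ring

noncomputable def phi (q a b : ℝ) : ℝ :=
  -((q*a + (1-q)*b) * Real.logb 2 (q*a + (1-q)*b))
  - ((q*b + (1-q)*a) * Real.logb 2 (q*b + (1-q)*a))
  + a * Real.logb 2 a + b * Real.logb 2 b

lemma phi_eq {q a b : ℝ} (hq0 : 0 ≤ q) (hq1 : q ≤ 1) (ha : 0 ≤ a) (hb : 0 ≤ b)
    (hs : 0 < a + b) :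
    phi q a b = (a+b) * (binEnt (q*(a/(a+b)) + (1-q)*(b/(a+b))) - binEnt (b/(a+b))) := by
  set s := a + b with hsdef
  have hsne : s ≠ 0 := ne_of_gt hs
  set α := a/s with hα
  set δ := b/s with hδ
  have hαδ : α + δ = 1 := by rw [hα, hδ]; field_simp; rw [hsdef]
  have hα0 : 0 ≤ α := div_nonneg ha hs.le
  have hδ0 : 0 ≤ δ := div_nonneg hb hs.le
  set m := q*α + (1-q)*δ with hm
  have hm0 : 0 ≤ m := add_nonneg (mul_nonneg hq0 hα0) (mul_nonneg (by linarith) hδ0)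
  have hm' : q*δ + (1-q)*α = 1 - m := by rw [hm]; linear_combination hαδ
  have hm1 : 0 ≤ 1 - m := by
    rw [← hm']; exact add_nonneg (mul_nonneg hq0 hδ0) (mul_nonneg (by linarith) hα0)
  have e1 : q*a + (1-q)*b = s * m := by rw [hm, hα, hδ]; field_simp
  have e2 : q*b + (1-q)*a = s * (1-m) := by rw [← hm', hα, hδ]; field_simp
  have e3 : a = s * α := by rw [hα]; field_simp
  have e4 : b = s * δ := by rw [hδ]; field_simp
  have hδ1 : 1 - δ = α := by linarith
  clear_value s α δ m
  rw [phi, e1, e2, binEnt, binEnt, hδ1]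
  rw [e3, e4]
  rw [mul_logb_split hs hm0, mul_logb_split hs hm1, mul_logb_split hs hα0,
    mul_logb_split hs hδ0]
  linear_combination (s * Real.logb 2 s) * hαδ

lemma phi_half {a b : ℝ} (ha : 0 ≤ a) (hb : 0 ≤ b) (hs : 0 < a+b) :
    phi (1/2) a b = (a+b) * (1 - binEnt (b/(a+b))) := by
  rw [phi_eq (by norm_num) (by norm_num) ha hb hs]
  have h : (1/2:ℝ)*(a/(a+b)) + (1-1/2)*(b/(a+b)) = 1/2 := by
    field_simp
    ring
  rw [h, binEnt_half]

lemma phi_zero (q : ℝ) : phi q 0 0 = 0 := by simp [phi]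

lemma phi_le {q a b : ℝ} (hq0 : 0 ≤ q) (hq1 : q ≤ 1) (ha : 0 ≤ a) (hb : 0 ≤ b) :
    phi q a b ≤ binEnt q * phi (1/2) a b := by
  rcases eq_or_lt_of_le (add_nonneg ha hb) with h|hs
  · have ha0 : a = 0 := by linarith
    have hb0 : b = 0 := by linarith
    rw [ha0, hb0, phi_zero, phi_zero, mul_zero]
  · have hδ0 : 0 ≤ b/(a+b) := div_nonneg hb hs.le
    have hδ1 : b/(a+b) ≤ 1 := by rw [div_le_one hs]; linarith
    rw [phi_eq hq0 hq1 ha hb hs, phi_half ha hb hs]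
    have hα : a/(a+b) = 1 - b/(a+b) := by field_simp; ring
    rw [hα]
    have key := bsc_ineq hq0 hq1 hδ0 hδ1
    calc (a+b) * (binEnt (q*(1-b/(a+b)) + (1-q)*(b/(a+b))) - binEnt (b/(a+b)))
        ≤ (a+b) * (binEnt q * (1 - binEnt (b/(a+b)))) :=
          mul_le_mul_of_nonneg_left key hs.le
      _ = binEnt q * ((a+b) * (1 - binEnt (b/(a+b)))) := by ring

lemma phi_half_nonneg {a b : ℝ} (ha : 0 ≤ a) (hb : 0 ≤ b) : 0 ≤ phi (1/2) a b := by
  rcases eq_or_lt_of_le (add_nonneg ha hb) with h|hs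
  · have ha0 : a = 0 := by linarith
    have hb0 : b = 0 := by linarith
    rw [ha0, hb0, phi_zero]
  · rw [phi_half ha hb hs]
    have hδ0 : 0 ≤ b/(a+b) := div_nonneg hb hs.le
    have hδ1 : b/(a+b) ≤ 1 := by rw [div_le_one hs]; linarith
    have := binEnt_le_one hδ0 hδ1
    nlinarith

lemma phi_half_le {a b : ℝ} (ha : 0 ≤ a) (hb : 0 ≤ b) : phi (1/2) a b ≤ a + b := by
  rcases eq_or_lt_of_le (add_nonneg ha hb) with h|hs
  · have ha0 : a = 0 := by linarith
    have hb0 : b = 0 := by linarith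
    rw [ha0, hb0, phi_zero]; linarith
  · rw [phi_half ha hb hs]
    have hδ0 : 0 ≤ b/(a+b) := div_nonneg hb hs.le
    have hδ1 : b/(a+b) ≤ 1 := by rw [div_le_one hs]; linarith
    have := binEnt_nonneg hδ0 hδ1
    nlinarith




section chan
variable {Y : Type*} [Fintype Y] (N : Bool → Y → ℝ)

lemma ent_eq (f : Y → ℝ) : ent f = -∑ y, f y * Real.logb 2 (f y) := by
  rw [ent, ← Finset.sum_neg_distrib]

lemma MI_eq_sum (π : Equiv.Perm Y) (hinv : ∀ y, π (π y) = y)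
    (hsym : ∀ y, N true y = N false (π y)) (q : ℝ) :
    MI q N = (1/2) * ∑ y, phi q (N true y) (N false y) := by
  have hsym' : ∀ y, N false y = N true (π y) := by
    intro y; rw [hsym (π y), hinv]
  have expand : ∀ y ∈ Finset.univ, phi q (N true y) (N false y)
      = -((q * N true y + (1-q) * N false y) * Real.logb 2 (q * N true y + (1-q) * N false y))
        + -((q * N true (π y) + (1-q) * N false (π y)) *
            Real.logb 2 (q * N true (π y) + (1-q) * N false (π y)))
        + N true y * Real.logb 2 (N true y) + N false y * Real.logb 2 (N false y) := by
    intro y _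
    rw [phi, ← hsym' y, ← hsym y]
    ring
  have h2 : ∑ y, -((q * N true (π y) + (1-q) * N false (π y)) *
      Real.logb 2 (q * N true (π y) + (1-q) * N false (π y)))
      = ∑ y, -((q * N true y + (1-q) * N false y) *
        Real.logb 2 (q * N true y + (1-q) * N false y)) :=
    Equiv.sum_comp π (fun y => -((q * N true y + (1-q) * N false y) *
      Real.logb 2 (q * N true y + (1-q) * N false y)))
  have h4 : ∑ y, N false y * Real.logb 2 (N false y)
      = ∑ y, N true y * Real.logb 2 (N true y) := by
    rw [← Equiv.sum_comp π (fun y => N false y * Real.logb 2 (N false y))]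
    exact Finset.sum_congr rfl (fun y _ => by rw [← hsym y])
  rw [Finset.sum_congr rfl expand]
  rw [Finset.sum_add_distrib, Finset.sum_add_distrib, Finset.sum_add_distrib, h2]
  simp only [MI, ent]
  simp only [Finset.sum_neg_distrib]
  rw [h4]
  ring

variable (hpos : ∀ b y, 0 ≤ N b y) (hsum : ∀ b, ∑ y, N b y = 1)
  (π : Equiv.Perm Y) (hinv : ∀ y, π (π y) = y) (hsym : ∀ y, N true y = N false (π y))

include hpos hinv hsym in
lemma MI_le_scaled {q : ℝ} (hq0 : 0 ≤ q) (hq1 : q ≤ 1) :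
    MI q N ≤ binEnt q * MI (1/2) N := by
  rw [MI_eq_sum N π hinv hsym, MI_eq_sum N π hinv hsym]
  have h := Finset.sum_le_sum (f := fun y => phi q (N true y) (N false y))
    (g := fun y => binEnt q * phi (1/2) (N true y) (N false y))
    (fun y (_ : y ∈ Finset.univ) => phi_le hq0 hq1 (hpos true y) (hpos false y))
  rw [← Finset.mul_sum] at h
  linarith

include hpos hinv hsym in
lemma MI_half_nonneg : 0 ≤ MI (1/2) N := by
  rw [MI_eq_sum N π hinv hsym]
  have h := Finset.sum_nonneg (s := Finset.univ) (f := fun y => phi (1/2) (N true y) (N false y))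
    (fun y _ => phi_half_nonneg (hpos true y) (hpos false y))
  linarith

include hpos hsum hinv hsym in
lemma MI_le_one {q : ℝ} (hq0 : 0 ≤ q) (hq1 : q ≤ 1) : MI q N ≤ 1 := by
  have h1 := MI_le_scaled N hpos π hinv hsym hq0 hq1
  have h2 : MI (1/2) N ≤ 1 := by
    rw [MI_eq_sum N π hinv hsym]
    have h := Finset.sum_le_sum (f := fun y => phi (1/2) (N true y) (N false y))
      (g := fun y => N true y + N false y)
      (fun y (_ : y ∈ Finset.univ) => phi_half_le (hpos true y) (hpos false y))
    rw [Finset.sum_add_distrib, hsum true, hsum false] at h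
    linarith
  have h3 := MI_half_nonneg N hpos π hinv hsym
  have h4 := binEnt_le_one hq0 hq1
  have h5 := binEnt_nonneg hq0 hq1
  nlinarith

lemma MI_zero : MI 0 N = 0 := by
  have : (fun y => (0:ℝ) * N true y + (1 - 0) * N false y) = N false := by
    ext y; ring_nf
  rw [MI, this]; ring

end chan

lemma MI_BEC {C q : ℝ} (hC0 : 0 ≤ C) (hC1 : C ≤ 1) (hq0 : 0 ≤ q) (hq1 : q ≤ 1) :
    MI q (BEC (1 - C)) = C * binEnt q := by
  have hent : ∀ f : Bool ⊕ Unit → ℝ, ent f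
      = -(f (Sum.inl true) * Real.logb 2 (f (Sum.inl true)))
        + -(f (Sum.inl false) * Real.logb 2 (f (Sum.inl false)))
        + -(f (Sum.inr ()) * Real.logb 2 (f (Sum.inr ()))) := by
    intro f
    rw [ent, Fintype.sum_sum_type]
    simp only [Fintype.sum_bool, Finset.univ_unique, Finset.sum_singleton]
    try ring
  rcases eq_or_lt_of_le hC0 with h|hC0'
  · rw [← h]
    rw [MI, hent, hent, hent]
    norm_num [BEC]
  · rw [MI, hent, hent, hent]
    simp only [BEC]
    norm_num
    have s1 : q * C * Real.logb 2 (q * C)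
        = C * q * Real.logb 2 C + C * q * Real.logb 2 q := by
      rw [show q * C = C * q by ring, mul_logb_split hC0' hq0]
    have s2 : (1-q) * C * Real.logb 2 ((1-q) * C)
        = C * (1-q) * Real.logb 2 C + C * (1-q) * Real.logb 2 (1-q) := by
      rw [show (1-q) * C = C * (1-q) by ring, mul_logb_split hC0' (by linarith)]
    rw [show q*(1-C) + (1-q)*(1-C) = 1-C by ring, s1, s2, binEnt]
    ring

theorem stmt15 {Y : Type*} [Fintype Y] (N : Bool → Y → ℝ)
    (hpos : ∀ b y, 0 ≤ N b y) (hsum : ∀ b, ∑ y, N b y = 1)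
    (π : Equiv.Perm Y) (hinv : ∀ y, π (π y) = y)
    (hsym : ∀ y, N true y = N false (π y))
    (C : ℝ) (hC : C = sSup ((fun q => MI q N) '' Set.Icc (0:ℝ) 1)) :
    ∀ q ∈ Set.Icc (0:ℝ) 1, MI q N ≤ MI q (BEC (1 - C)) := by
  intro q hq
  obtain ⟨hq0, hq1⟩ := hq
  have hbdd : BddAbove ((fun q => MI q N) '' Set.Icc (0:ℝ) 1) := by
    refine ⟨1, fun x hx => ?_⟩
    obtain ⟨p, hp, rfl⟩ := hx
    exact MI_le_one N hpos hsum π hinv hsym hp.1 hp.2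
  have hne : ((fun q => MI q N) '' Set.Icc (0:ℝ) 1).Nonempty :=
    ⟨MI 0 N, ⟨0, ⟨le_refl 0, by norm_num⟩, rfl⟩⟩
  have hhalfmem : MI (1/2) N ∈ (fun q => MI q N) '' Set.Icc (0:ℝ) 1 :=
    ⟨1/2, ⟨by norm_num, by norm_num⟩, rfl⟩
  have hChalf : MI (1/2) N ≤ C := hC ▸ le_csSup hbdd hhalfmem
  have hC0 : 0 ≤ C := by
    have : MI 0 N ∈ (fun q => MI q N) '' Set.Icc (0:ℝ) 1 :=
      ⟨0, ⟨le_refl 0, by norm_num⟩, rfl⟩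
    have h := le_csSup hbdd this
    rw [MI_zero] at h
    exact hC ▸ h
  have hC1 : C ≤ 1 := by
    rw [hC]
    exact csSup_le hne (fun x hx => by
      obtain ⟨p, hp, rfl⟩ := hx
      exact MI_le_one N hpos hsum π hinv hsym hp.1 hp.2)
  rw [MI_BEC hC0 hC1 hq0 hq1]
  calc MI q N ≤ binEnt q * MI (1/2) N := MI_le_scaled N hpos π hinv hsym hq0 hq1
    _ ≤ binEnt q * C := mul_le_mul_of_nonneg_left hChalf (binEnt_nonneg hq0 hq1)
    _ = C * binEnt q := by ring
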